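/- arXiv:2307.10736 — 2 statements merged into one kernel-verified Lean document; each statement's English description precedes it below -/
import Mathlib

section
/- Fix d ≥ 1, a nonzero vector μ ∈ ℝ^d, σ > 0, and p ∈ (1/2, 1). Let D be the distribution on ℝ^d × {−1,+1} where Y is uniform on {−1,+1}, X given Y=+1 is N(μ, σ²I), and X given Y=−1 is the mixture p·N(−μ, σ²I) + (1−p)·N(3μ, σ²I). Let h^MDA be the classifier that outputs +1 if f(x; μ, σ²I) ≥ p·f(x; −μ, σ²I) and f(x; μ, σ²I) ≥ (1−p)·f(x; 3μ, σ²I), and −1 otherwise, where f(·; m, σ²I) denotes the N(m, σ²I) density. Then Pr_{(X,Y)∼D}[h^MDA(X) ≠ Y] ≤ (1/2)[Φ(−‖μ‖/σ + σ·ln p/(2‖μ‖)) + Φ(−‖μ‖/σ + σ·ln(1−p)/(2‖μ‖)) + p·Φ(−‖μ‖/σ − σ·ln p/(2‖μ‖)) + (1−p)·Φ(−‖μ‖/σ − σ·ln(1−p)/‖μ‖)]. -/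
open MeasureTheory Real Set ProbabilityTheory
open scoped ENNReal RealInnerProductSpace

/-- The standard normal cumulative distribution function
`Φ(z) = ∫_{−∞}^z (1/√(2π)) e^{−u²/2} du`. -/
noncomputable def stdNormCDF (z : ℝ) : ℝ :=
  ∫ u in Set.Iic z, (1 / Real.sqrt (2 * Real.pi)) * Real.exp (-u ^ 2 / 2)
/-- Density of the `d`-dimensional Gaussian `N(m, σ²I)`:
`f(x; m, σ²I) = (2πσ²)^{−d/2} exp(−‖x−m‖²/(2σ²))`. -/
noncomputable def gaussPdf (d : ℕ) (m : EuclideanSpace ℝ (Fin d)) (σ : ℝ)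
    (x : EuclideanSpace ℝ (Fin d)) : ℝ :=
  (2 * Real.pi * σ ^ 2) ^ (-(d : ℝ) / 2) * Real.exp (-‖x - m‖ ^ 2 / (2 * σ ^ 2))

/-- The `d`-dimensional Gaussian measure `N(m, σ²I)` on `ℝ^d`. -/
noncomputable def gauss (d : ℕ) (m : EuclideanSpace ℝ (Fin d)) (σ : ℝ) :
    Measure (EuclideanSpace ℝ (Fin d)) :=
  volume.withDensity fun x => ENNReal.ofReal (gaussPdf d m σ x)
/-- The data-generating distribution `D` on `ℝ^d × {−1,+1}` (labels embedded in `ℝ`):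
`Y` is uniform on `{−1,+1}`, `X | Y=+1 ∼ N(μ, σ²I)`, and
`X | Y=−1 ∼ p·N(−μ, σ²I) + (1−p)·N(3μ, σ²I)`. -/
noncomputable def Dmix (d : ℕ) (μv : EuclideanSpace ℝ (Fin d)) (σ p : ℝ) :
    Measure (EuclideanSpace ℝ (Fin d) × ℝ) :=
  ENNReal.ofReal (1 / 2) • (gauss d μv σ).map (fun x => (x, (1 : ℝ)))
    + ENNReal.ofReal (p / 2) • (gauss d (-μv) σ).map (fun x => (x, (-1 : ℝ)))
    + ENNReal.ofReal ((1 - p) / 2) • (gauss d ((3 : ℝ) • μv) σ).map (fun x => (x, (-1 : ℝ)))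
/-- The MDA classifier: outputs `+1` iff `f(x; μ, σ²I) ≥ p·f(x; −μ, σ²I)` and
`f(x; μ, σ²I) ≥ (1−p)·f(x; 3μ, σ²I)`. -/
noncomputable def hMDA (d : ℕ) (μv : EuclideanSpace ℝ (Fin d)) (σ p : ℝ)
    (x : EuclideanSpace ℝ (Fin d)) : ℝ :=
  if p * gaussPdf d (-μv) σ x ≤ gaussPdf d μv σ x ∧
      (1 - p) * gaussPdf d ((3 : ℝ) • μv) σ x ≤ gaussPdf d μv σ x then 1 else -1

open scoped NNReal

/-! ### Auxiliary lemmas -/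

lemma stdNormCDF_nonneg (z : ℝ) : 0 ≤ stdNormCDF z := by
  apply setIntegral_nonneg measurableSet_Iic
  intro x _
  positivity

lemma gaussianReal01_Iic (z : ℝ) :
    gaussianReal 0 1 (Iic z) = ENNReal.ofReal (stdNormCDF z) := by
  rw [gaussianReal_apply_eq_integral _ one_ne_zero]
  congr 1
  refine setIntegral_congr_fun measurableSet_Iic fun x _ => ?_
  simp [gaussianPDFReal, one_div]

lemma stdNormCDF_mono : Monotone stdNormCDF := by
  intro a b hab
  have h := measure_mono (μ := gaussianReal 0 1) (Iic_subset_Iic.mpr hab)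
  rw [gaussianReal01_Iic, gaussianReal01_Iic] at h
  exact (ENNReal.ofReal_le_ofReal_iff (stdNormCDF_nonneg b)).mp h

lemma gr_Iic (σ : ℝ) (hσ : 0 < σ) (c q : ℝ) :
    gaussianReal c ⟨σ^2, sq_nonneg σ⟩ (Iic q) = ENNReal.ofReal (stdNormCDF ((q - c)/σ)) := by
  have h1 : (gaussianReal 0 1).map (σ * ·) = gaussianReal 0 ⟨σ^2, sq_nonneg σ⟩ := by
    rw [gaussianReal_map_const_mul]; norm_num; rfl
  have h2 : (gaussianReal 0 ⟨σ^2, sq_nonneg σ⟩).map (· + c)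
      = gaussianReal c ⟨σ^2, sq_nonneg σ⟩ := by
    erw [gaussianReal_map_add_const]; norm_num
  rw [← h2, Measure.map_apply (measurable_add_const c) measurableSet_Iic]
  have hpre : (· + c) ⁻¹' (Iic q) = Iic (q - c) := by
    ext x; simp [le_sub_iff_add_le]
  rw [hpre, ← h1, Measure.map_apply (measurable_const_mul σ) measurableSet_Iic]
  have hpre2 : (σ * ·) ⁻¹' (Iic (q - c)) = Iic ((q - c)/σ) := by
    ext x; simp [le_div_iff₀ hσ, mul_comm]
  rw [hpre2, gaussianReal01_Iic]

lemma gr_Ici (σ : ℝ) (hσ : 0 < σ) (c q : ℝ) :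
    gaussianReal c ⟨σ^2, sq_nonneg σ⟩ (Ici q) = ENNReal.ofReal (stdNormCDF ((c - q)/σ)) := by
  have h1 : (gaussianReal (-c) ⟨σ^2, sq_nonneg σ⟩).map ((-1 : ℝ) * ·)
      = gaussianReal c ⟨σ^2, sq_nonneg σ⟩ := by
    erw [gaussianReal_map_const_mul]
    norm_num
    exact congrArg _ (one_mul _)
  rw [← h1, Measure.map_apply (measurable_const_mul _) measurableSet_Ici]
  have hpre : ((-1 : ℝ) * ·) ⁻¹' (Ici q) = Iic (-q) := by
    ext x; simp [le_neg]
  rw [hpre, gr_Iic σ hσ]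
  ring_nf

lemma split_lemma {k : ℕ} (μs : Fin (k+1) → ℝ) (v : ℝ≥0) {S : Set ℝ} (hS : MeasurableSet S) :
    ∫⁻ z in {z : Fin (k+1) → ℝ | z 0 ∈ S}, ∏ i, gaussianPDF (μs i) v (z i) ∂volume
      = (∫⁻ t in S, gaussianPDF (μs 0) v t)
        * ∫⁻ w : Fin k → ℝ, ∏ j, gaussianPDF (μs (Fin.succ j)) v (w j) ∂volume := by
  have hmp := measurePreserving_piFinSuccAbove (fun _ : Fin (k+1) => (volume : Measure ℝ)) 0
  rw [← volume_pi, ← volume_pi] at hmp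
  set e := MeasurableEquiv.piFinSuccAbove (fun _ : Fin (k+1) => ℝ) 0 with he
  have hg : Measurable fun b : Fin k → ℝ => ∏ j, gaussianPDF (μs (Fin.succ j)) v (b j) :=
    Finset.measurable_prod _ fun j _ =>
      (measurable_gaussianPDF _ _).comp (measurable_pi_apply j)
  have hfun : ∀ z : Fin (k+1) → ℝ,
      (fun w : ℝ × (Fin k → ℝ) => gaussianPDF (μs 0) v w.1
          * ∏ j, gaussianPDF (μs (Fin.succ j)) v (w.2 j)) (e z)
        = ∏ i, gaussianPDF (μs i) v (z i) := by
    intro z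
    rw [Fin.prod_univ_succ]
    simp [e, MeasurableEquiv.piFinSuccAbove_apply, Fin.removeNth, Fin.succAbove, Fin.tail]
  have hpre : e ⁻¹' (S ×ˢ (univ : Set (Fin k → ℝ))) = {z : Fin (k+1) → ℝ | z 0 ∈ S} := by
    ext z
    simp [e, MeasurableEquiv.piFinSuccAbove_apply, Set.mem_prod]
  calc ∫⁻ z in {z : Fin (k+1) → ℝ | z 0 ∈ S}, ∏ i, gaussianPDF (μs i) v (z i) ∂volume
      = ∫⁻ z in e ⁻¹' (S ×ˢ (univ : Set (Fin k → ℝ))),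
          (fun w : ℝ × (Fin k → ℝ) => gaussianPDF (μs 0) v w.1
            * ∏ j, gaussianPDF (μs (Fin.succ j)) v (w.2 j)) (e z) ∂volume := by
        rw [hpre]
        exact (setLIntegral_congr_fun ((measurable_pi_apply 0) hS)
          (fun z _ => (hfun z).symm))
    _ = ∫⁻ w in S ×ˢ (univ : Set (Fin k → ℝ)), gaussianPDF (μs 0) v w.1
            * ∏ j, gaussianPDF (μs (Fin.succ j)) v (w.2 j)
          ∂((volume : Measure ℝ).prod (volume : Measure (Fin k → ℝ))) := by
        have h := hmp.setLIntegral_comp_preimage_emb e.measurableEmbedding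
          (fun w : ℝ × (Fin k → ℝ) => gaussianPDF (μs 0) v w.1
            * ∏ j, gaussianPDF (μs (Fin.succ j)) v (w.2 j)) (S ×ˢ (univ : Set (Fin k → ℝ)))
        convert h using 2
    _ = _ := by
        rw [← Measure.prod_restrict, Measure.restrict_univ]
        exact lintegral_prod_mul (measurable_gaussianPDF _ _).aemeasurable hg.aemeasurable

lemma prod_mass (σ : ℝ) (hσ : 0 < σ) : ∀ (k : ℕ) (μs : Fin k → ℝ),
    ∫⁻ w : Fin k → ℝ, ∏ j, gaussianPDF (μs j) (⟨σ^2, sq_nonneg σ⟩ : ℝ≥0) (w j) ∂volume = 1 := by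
  have hv : (⟨σ^2, sq_nonneg σ⟩ : ℝ≥0) ≠ 0 :=
    fun h => (pow_pos hσ 2).ne' (congrArg NNReal.toReal h)
  intro k
  induction k with
  | zero =>
      intro μs
      simp only [Finset.univ_eq_empty, Finset.prod_empty, lintegral_one]
      rw [volume_pi, Measure.pi_univ]
      simp
  | succ n ih =>
      intro μs
      have h := split_lemma μs (⟨σ^2, sq_nonneg σ⟩ : ℝ≥0) (MeasurableSet.univ (α := ℝ))
      simp only [Set.mem_univ, Set.setOf_true, setLIntegral_univ] at h
      rw [h, ih fun j => μs (Fin.succ j), lintegral_gaussianPDF_eq_one _ hv, one_mul]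

set_option maxHeartbeats 1000000 in
lemma gauss_halfspace {n : ℕ} (m u : EuclideanSpace ℝ (Fin (n+1))) (hu : ‖u‖ = 1)
    (σ : ℝ) (hσ : 0 < σ) {S : Set ℝ} (hS : MeasurableSet S) :
    gauss (n+1) m σ {x | ⟪u, x⟫ ∈ S} = gaussianReal ⟪u, m⟫ ⟨σ^2, sq_nonneg σ⟩ S := by
  have hA2 : (0:ℝ) < 2 * Real.pi * σ ^ 2 := by positivity
  -- orthonormal basis with b 0 = u
  have hcard : Module.finrank ℝ (EuclideanSpace ℝ (Fin (n+1))) = Fintype.card (Fin (n+1)) := by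
    simp
  have horth : Orthonormal ℝ (({0} : Set (Fin (n+1))).restrict (fun _ => u)) := by
    rw [orthonormal_iff_ite]
    rintro ⟨i, hi⟩ ⟨j, hj⟩
    simp only [Set.mem_singleton_iff] at hi hj
    subst hi; subst hj
    simp only [Set.restrict_apply, if_pos rfl]
    rw [real_inner_self_eq_norm_sq, show ({0} : Set (Fin (n+1))).restrict (fun _ => u) ⟨0, hi⟩ = u from rfl, hu]
    norm_num
  obtain ⟨b, hb⟩ := Orthonormal.exists_orthonormalBasis_extension_of_card_eq hcard horth
  have hb0 : b 0 = u := hb 0 rfl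
  set c : Fin (n+1) → ℝ := fun i => b.repr m i with hc
  -- measurability
  have hinner : Measurable fun x : EuclideanSpace ℝ (Fin (n+1)) => ⟪u, x⟫ :=
    (continuous_const.inner continuous_id).measurable
  have hA : MeasurableSet {x : EuclideanSpace ℝ (Fin (n+1)) | ⟪u, x⟫ ∈ S} := hinner hS
  rw [gauss, withDensity_apply _ hA]
  -- transport through e.symm
  set e := (b.measurableEquiv).trans (MeasurableEquiv.toLp 2 (Fin (n+1) → ℝ)).symm with he
  have hmp : MeasurePreserving e.symm volume volume :=
    (b.measurePreserving_measurableEquiv.symm).comp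
      (EuclideanSpace.volume_preserving_symm_measurableEquiv_toLp (Fin (n+1))).symm
  have hesymm : ∀ z : Fin (n+1) → ℝ,
      e.symm z = b.repr.symm ((MeasurableEquiv.toLp 2 (Fin (n+1) → ℝ)).symm.symm z) := fun z => rfl
  have hcoord : ∀ z : Fin (n+1) → ℝ, ∀ i, b.repr (e.symm z) i = z i := by
    intro z i
    rw [hesymm]
    simp [MeasurableEquiv.coe_toLp]
  have hkey : ∀ z : Fin (n+1) → ℝ, ⟪u, e.symm z⟫ = z 0 := by
    intro z
    rw [← hb0, ← OrthonormalBasis.repr_apply_apply, hcoord]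
  have hpre : e.symm ⁻¹' {x : EuclideanSpace ℝ (Fin (n+1)) | ⟪u, x⟫ ∈ S}
      = {z : Fin (n+1) → ℝ | z 0 ∈ S} := by
    ext z
    rw [Set.mem_preimage, Set.mem_setOf_eq, hkey z, Set.mem_setOf_eq]
  -- the density in coordinates
  have hF : ∀ z : Fin (n+1) → ℝ,
      ENNReal.ofReal (gaussPdf (n+1) m σ (e.symm z))
        = ∏ i, gaussianPDF (c i) (⟨σ^2, sq_nonneg σ⟩ : ℝ≥0) (z i) := by
    intro z
    have hnorm : ‖e.symm z - m‖^2 = ∑ i, (z i - c i)^2 := by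
      have h1 : e.symm z - m = b.repr.symm (b.repr (e.symm z) - b.repr m) := by
        rw [map_sub]
        simp
      rw [h1, b.repr.symm.norm_map]
      rw [EuclideanSpace.norm_eq, Real.sq_sqrt (by positivity)]
      congr 1
      ext i
      rw [Real.norm_eq_abs, sq_abs]
      congr 1
      simp [hcoord z i, hc]
    rw [gaussPdf, hnorm]
    simp only [gaussianPDF]
    erw [← ENNReal.ofReal_prod_of_nonneg (fun i _ => gaussianPDFReal_nonneg _ _ _)]
    congr 1
    have hfac : ∀ ci t : ℝ, gaussianPDFReal ci (⟨σ^2, sq_nonneg σ⟩ : ℝ≥0) t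
        = (2 * Real.pi * σ ^ 2) ^ (-(1:ℝ)/2) * Real.exp (-(t - ci)^2 / (2 * σ^2)) := by
      intro ci t
      unfold gaussianPDFReal
      erw [NNReal.coe_mk]
      rw [Real.sqrt_eq_rpow, ← Real.rpow_neg hA2.le]
      norm_num
    simp only [hfac]
    rw [Finset.prod_mul_distrib, Finset.prod_const, ← Real.exp_sum, Finset.card_univ,
      Fintype.card_fin]
    have hsc : ((2 * Real.pi * σ ^ 2) ^ (-(1:ℝ)/2)) ^ (n+1)
        = (2 * Real.pi * σ ^ 2) ^ (-((n+1 : ℕ) : ℝ) / 2) := by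
      rw [← Real.rpow_natCast ((2 * Real.pi * σ ^ 2) ^ (-(1:ℝ)/2)) (n+1),
        ← Real.rpow_mul hA2.le]
      congr 1
      push_cast
      ring
    rw [hsc]
    congr 1
    rw [← Finset.sum_div, ← Finset.sum_neg_distrib]
  -- now the measure computation
  have hv : (⟨σ^2, sq_nonneg σ⟩ : ℝ≥0) ≠ 0 :=
    fun h => (pow_pos hσ 2).ne' (congrArg NNReal.toReal h)
  calc ∫⁻ x in {x : EuclideanSpace ℝ (Fin (n+1)) | ⟪u, x⟫ ∈ S},
        ENNReal.ofReal (gaussPdf (n+1) m σ x) ∂volume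
      = ∫⁻ z in e.symm ⁻¹' {x : EuclideanSpace ℝ (Fin (n+1)) | ⟪u, x⟫ ∈ S},
          ENNReal.ofReal (gaussPdf (n+1) m σ (e.symm z)) ∂volume := by
        refine (MeasurePreserving.setLIntegral_comp_preimage_emb hmp
          e.symm.measurableEmbedding _ _).symm
    _ = ∫⁻ z in {z : Fin (n+1) → ℝ | z 0 ∈ S},
          ∏ i, gaussianPDF (c i) (⟨σ^2, sq_nonneg σ⟩ : ℝ≥0) (z i) ∂volume := by
        rw [hpre]
        exact setLIntegral_congr_fun ((measurable_pi_apply 0) hS)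
          (fun z _ => hF z)
    _ = (∫⁻ t in S, gaussianPDF (c 0) (⟨σ^2, sq_nonneg σ⟩ : ℝ≥0) t) * 1 := by
        erw [split_lemma _ _ hS, prod_mass σ hσ]
    _ = gaussianReal ⟪u, m⟫ ⟨σ^2, sq_nonneg σ⟩ S := by
        rw [mul_one, ← gaussianReal_apply _ hv]
        congr 1
        rw [hc]
        simp only
        rw [OrthonormalBasis.repr_apply_apply, hb0]

lemma gauss_ratio (d : ℕ) (m w : EuclideanSpace ℝ (Fin d)) (σ : ℝ) (hσ : 0 < σ)
    (q : ℝ) (hq : 0 < q) (x : EuclideanSpace ℝ (Fin d)) :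
    q * gaussPdf d w σ x ≤ gaussPdf d m σ x
      ↔ Real.log q ≤ (‖x - w‖^2 - ‖x - m‖^2) / (2 * σ^2) := by
  have hA2 : (0:ℝ) < 2 * Real.pi * σ ^ 2 := by positivity
  have hC : (0:ℝ) < (2 * Real.pi * σ ^ 2) ^ (-(d : ℝ) / 2) := Real.rpow_pos_of_pos hA2 _
  unfold gaussPdf
  rw [show q * ((2 * Real.pi * σ ^ 2) ^ (-(d : ℝ) / 2) * Real.exp (-‖x - w‖ ^ 2 / (2 * σ ^ 2)))
      = (2 * Real.pi * σ ^ 2) ^ (-(d : ℝ) / 2) * (q * Real.exp (-‖x - w‖ ^ 2 / (2 * σ ^ 2)))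
    from by ring]
  rw [mul_le_mul_iff_right₀ hC]
  constructor <;> intro h
  · have h' : Real.log (q * Real.exp (-‖x - w‖ ^ 2 / (2 * σ ^ 2)))
        ≤ Real.log (Real.exp (-‖x - m‖ ^ 2 / (2 * σ ^ 2))) :=
      Real.log_le_log (by positivity) h
    rw [Real.log_mul hq.ne' (Real.exp_ne_zero _), Real.log_exp, Real.log_exp] at h'
    have hk : (‖x - w‖ ^ 2 - ‖x - m‖ ^ 2) / (2 * σ ^ 2)
        = -‖x - m‖ ^ 2 / (2 * σ ^ 2) - -‖x - w‖ ^ 2 / (2 * σ ^ 2) := by ring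
    linarith
  · have h' : Real.log q + -‖x - w‖ ^ 2 / (2 * σ ^ 2) ≤ -‖x - m‖ ^ 2 / (2 * σ ^ 2) := by
      have hk : (‖x - w‖ ^ 2 - ‖x - m‖ ^ 2) / (2 * σ ^ 2)
          = -‖x - m‖ ^ 2 / (2 * σ ^ 2) - -‖x - w‖ ^ 2 / (2 * σ ^ 2) := by ring
      linarith
    calc q * Real.exp (-‖x - w‖ ^ 2 / (2 * σ ^ 2))
        = Real.exp (Real.log q + -‖x - w‖ ^ 2 / (2 * σ ^ 2)) := by
          rw [Real.exp_add, Real.exp_log hq]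
      _ ≤ Real.exp (-‖x - m‖ ^ 2 / (2 * σ ^ 2)) := Real.exp_le_exp.mpr h'

lemma cond_iff (d : ℕ) (μv : EuclideanSpace ℝ (Fin d)) (hμ : μv ≠ 0) (σ p : ℝ) (hσ : 0 < σ)
    (hp0 : 0 < p) (hp2 : p < 1) (x : EuclideanSpace ℝ (Fin d)) :
    (p * gaussPdf d (-μv) σ x ≤ gaussPdf d μv σ x ∧
      (1 - p) * gaussPdf d ((3 : ℝ) • μv) σ x ≤ gaussPdf d μv σ x)
    ↔ (σ^2 * Real.log p / (2 * ‖μv‖) ≤ ⟪(‖μv‖⁻¹ : ℝ) • μv, x⟫ ∧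
        ⟪(‖μv‖⁻¹ : ℝ) • μv, x⟫ ≤ 2 * ‖μv‖ - σ^2 * Real.log (1 - p) / (2 * ‖μv‖)) := by
  have hq0 : (0:ℝ) < 1 - p := by linarith
  have hn : (0:ℝ) < ‖μv‖ := norm_pos_iff.mpr hμ
  set t : ℝ := ⟪(‖μv‖⁻¹ : ℝ) • μv, x⟫ with ht
  have hIx : ⟪x, μv⟫ = ‖μv‖ * t := by
    rw [ht, real_inner_smul_left, real_inner_comm]
    field_simp
  have hs2 : (0:ℝ) < 2 * σ^2 := by positivity
  constructor
  · rintro ⟨h1, h2⟩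
    rw [gauss_ratio d μv (-μv) σ hσ p hp0 x] at h1
    rw [gauss_ratio d μv ((3:ℝ) • μv) σ hσ (1-p) hq0 x] at h2
    have e1 : ‖x - -μv‖^2 - ‖x - μv‖^2 = 4 * (‖μv‖ * t) := by
      rw [sub_neg_eq_add, norm_add_sq_real, norm_sub_sq_real, hIx]; ring
    have e3 : ‖x - (3:ℝ) • μv‖^2 - ‖x - μv‖^2 = 8 * ‖μv‖^2 - 4 * (‖μv‖ * t) := by
      rw [norm_sub_sq_real, norm_sub_sq_real, real_inner_smul_right, norm_smul, hIx]
      simp [Real.norm_eq_abs]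
      ring
    rw [e1, le_div_iff₀ hs2] at h1
    rw [e3, le_div_iff₀ hs2] at h2
    constructor
    · rw [div_le_iff₀ (by positivity)]
      nlinarith [h1]
    · rw [show (2:ℝ) * ‖μv‖ - σ^2 * Real.log (1-p) / (2 * ‖μv‖)
          = (4 * ‖μv‖^2 - σ^2 * Real.log (1-p)) / (2 * ‖μv‖) from by field_simp; ring,
        le_div_iff₀ (by positivity)]
      nlinarith [h2]
  · rintro ⟨h1, h2⟩
    rw [div_le_iff₀ (by positivity : (0:ℝ) < 2 * ‖μv‖)] at h1
    rw [show (2:ℝ) * ‖μv‖ - σ^2 * Real.log (1-p) / (2 * ‖μv‖)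
          = (4 * ‖μv‖^2 - σ^2 * Real.log (1-p)) / (2 * ‖μv‖) from by field_simp; ring,
        le_div_iff₀ (by positivity)] at h2
    constructor
    · rw [gauss_ratio d μv (-μv) σ hσ p hp0 x]
      have e1 : ‖x - -μv‖^2 - ‖x - μv‖^2 = 4 * (‖μv‖ * t) := by
        rw [sub_neg_eq_add, norm_add_sq_real, norm_sub_sq_real, hIx]; ring
      rw [e1, le_div_iff₀ hs2]
      nlinarith [h1]
    · rw [gauss_ratio d μv ((3:ℝ) • μv) σ hσ (1-p) hq0 x]
      have e3 : ‖x - (3:ℝ) • μv‖^2 - ‖x - μv‖^2 = 8 * ‖μv‖^2 - 4 * (‖μv‖ * t) := by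
        rw [norm_sub_sq_real, norm_sub_sq_real, real_inner_smul_right, norm_smul, hIx]
        simp [Real.norm_eq_abs]
        ring
      rw [e3, le_div_iff₀ hs2]
      nlinarith [h2]

/-- Upper bound on the misclassification error of the ideal MDA classifier under
the Gaussian-mixture data model `D`. -/
theorem mda_error_bound (d : ℕ) (hd : 1 ≤ d) (μv : EuclideanSpace ℝ (Fin d)) (hμ : μv ≠ 0)
    (σ p : ℝ) (hσ : 0 < σ) (hp1 : 1 / 2 < p) (hp2 : p < 1) :
    ((Dmix d μv σ p) {z | hMDA d μv σ p z.1 ≠ z.2}).toReal ≤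
      (1 / 2) * (stdNormCDF (-‖μv‖ / σ + σ * Real.log p / (2 * ‖μv‖))
        + stdNormCDF (-‖μv‖ / σ + σ * Real.log (1 - p) / (2 * ‖μv‖))
        + p * stdNormCDF (-‖μv‖ / σ - σ * Real.log p / (2 * ‖μv‖))
        + (1 - p) * stdNormCDF (-‖μv‖ / σ - σ * Real.log (1 - p) / ‖μv‖)) := by
  obtain ⟨n, rfl⟩ : ∃ n, d = n + 1 := ⟨d - 1, (Nat.succ_pred_eq_of_pos hd).symm⟩
  have hp0 : 0 < p := lt_trans (by norm_num) hp1
  have hq0 : (0:ℝ) < 1 - p := by linarith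
  have hn : (0:ℝ) < ‖μv‖ := norm_pos_iff.mpr hμ
  have hM0 : ‖μv‖ ≠ 0 := hn.ne'
  have hσ0 : σ ≠ 0 := hσ.ne'
  have hL : Real.log (1 - p) ≤ 0 := Real.log_nonpos (by linarith) (by linarith)
  set u : EuclideanSpace ℝ (Fin (n+1)) := (‖μv‖⁻¹ : ℝ) • μv with hu_def
  have hu : ‖u‖ = 1 := by
    rw [hu_def, norm_smul, norm_inv, norm_norm, inv_mul_cancel₀ hM0]
  set a' : ℝ := σ^2 * Real.log p / (2 * ‖μv‖) with ha'
  set b' : ℝ := 2 * ‖μv‖ - σ^2 * Real.log (1 - p) / (2 * ‖μv‖) with hb'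
  have hum : ⟪u, μv⟫ = ‖μv‖ := by
    rw [hu_def, real_inner_smul_left, real_inner_self_eq_norm_sq, sq]
    field_simp
  have humneg : ⟪u, -μv⟫ = -‖μv‖ := by rw [inner_neg_right, hum]
  have hum3 : ⟪u, (3:ℝ) • μv⟫ = 3 * ‖μv‖ := by rw [real_inner_smul_right, hum]
  set C : Set (EuclideanSpace ℝ (Fin (n+1))) := {x | a' ≤ ⟪u, x⟫ ∧ ⟪u, x⟫ ≤ b'} with hCdef
  have hcondC : ∀ x : EuclideanSpace ℝ (Fin (n+1)),
      (p * gaussPdf (n+1) (-μv) σ x ≤ gaussPdf (n+1) μv σ x ∧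
        (1 - p) * gaussPdf (n+1) ((3 : ℝ) • μv) σ x ≤ gaussPdf (n+1) μv σ x) ↔ x ∈ C :=
    fun x => cond_iff (n+1) μv hμ σ p hσ hp0 hp2 x
  set Φ₁ := stdNormCDF (-‖μv‖ / σ + σ * Real.log p / (2 * ‖μv‖)) with hΦ₁
  set Φ₂ := stdNormCDF (-‖μv‖ / σ + σ * Real.log (1 - p) / (2 * ‖μv‖)) with hΦ₂
  set Φ₃ := stdNormCDF (-‖μv‖ / σ - σ * Real.log p / (2 * ‖μv‖)) with hΦ₃
  set Φ₄ := stdNormCDF (-‖μv‖ / σ - σ * Real.log (1 - p) / ‖μv‖) with hΦ₄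
  set Φ₄' := stdNormCDF (-‖μv‖ / σ - σ * Real.log (1 - p) / (2 * ‖μv‖)) with hΦ₄'
  have h1nn : 0 ≤ Φ₁ := stdNormCDF_nonneg _
  have h2nn : 0 ≤ Φ₂ := stdNormCDF_nonneg _
  have h3nn : 0 ≤ Φ₃ := stdNormCDF_nonneg _
  have h4nn : 0 ≤ Φ₄ := stdNormCDF_nonneg _
  have h4nn' : 0 ≤ Φ₄' := stdNormCDF_nonneg _
  -- the four tail values
  have v1 : gauss (n+1) μv σ {x | ⟪u, x⟫ ∈ Iic a'} = ENNReal.ofReal Φ₁ := by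
    rw [gauss_halfspace μv u hu σ hσ measurableSet_Iic, hum, gr_Iic σ hσ, hΦ₁]
    congr 2
    rw [ha']
    field_simp
    ring
  have v2 : gauss (n+1) μv σ {x | ⟪u, x⟫ ∈ Ici b'} = ENNReal.ofReal Φ₂ := by
    rw [gauss_halfspace μv u hu σ hσ measurableSet_Ici, hum, gr_Ici σ hσ, hΦ₂]
    congr 2
    rw [hb']
    field_simp
    ring
  have v3 : gauss (n+1) (-μv) σ {x | ⟪u, x⟫ ∈ Ici a'} = ENNReal.ofReal Φ₃ := by
    rw [gauss_halfspace (-μv) u hu σ hσ measurableSet_Ici, humneg, gr_Ici σ hσ, hΦ₃]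
    congr 2
    rw [ha']
    field_simp
  have v4 : gauss (n+1) ((3:ℝ) • μv) σ {x | ⟪u, x⟫ ∈ Iic b'} = ENNReal.ofReal Φ₄' := by
    rw [gauss_halfspace ((3:ℝ) • μv) u hu σ hσ measurableSet_Iic, hum3, gr_Iic σ hσ, hΦ₄']
    congr 2
    rw [hb']
    field_simp
    ring
  -- preimages of the error set
  have hEpre1 : (fun x : EuclideanSpace ℝ (Fin (n+1)) => (x, (1:ℝ))) ⁻¹'
      {z : EuclideanSpace ℝ (Fin (n+1)) × ℝ | hMDA (n+1) μv σ p z.1 ≠ z.2} = Cᶜ := by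
    ext x
    simp only [Set.mem_preimage, Set.mem_setOf_eq, Set.mem_compl_iff]
    unfold hMDA
    by_cases h : p * gaussPdf (n+1) (-μv) σ x ≤ gaussPdf (n+1) μv σ x ∧
        (1 - p) * gaussPdf (n+1) ((3 : ℝ) • μv) σ x ≤ gaussPdf (n+1) μv σ x
    · rw [if_pos h]
      simp [(hcondC x).mp h]
    · rw [if_neg h]
      have hxC : x ∉ C := fun hc => h ((hcondC x).mpr hc)
      simp only [ne_eq, hxC, not_false_eq_true, iff_true]
      norm_num
  have hEpre2 : (fun x : EuclideanSpace ℝ (Fin (n+1)) => (x, (-1:ℝ))) ⁻¹'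
      {z : EuclideanSpace ℝ (Fin (n+1)) × ℝ | hMDA (n+1) μv σ p z.1 ≠ z.2} = C := by
    ext x
    simp only [Set.mem_preimage, Set.mem_setOf_eq]
    unfold hMDA
    by_cases h : p * gaussPdf (n+1) (-μv) σ x ≤ gaussPdf (n+1) μv σ x ∧
        (1 - p) * gaussPdf (n+1) ((3 : ℝ) • μv) σ x ≤ gaussPdf (n+1) μv σ x
    · rw [if_pos h]
      simp only [ne_eq, (hcondC x).mp h, iff_true]
      norm_num
    · rw [if_neg h]
      have hxC : x ∉ C := fun hc => h ((hcondC x).mpr hc)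
      simp [hxC]
  -- Dmix of the error set
  have hDmix : Dmix (n+1) μv σ p {z | hMDA (n+1) μv σ p z.1 ≠ z.2}
      = ENNReal.ofReal (1/2) * gauss (n+1) μv σ Cᶜ
        + ENNReal.ofReal (p/2) * gauss (n+1) (-μv) σ C
        + ENNReal.ofReal ((1-p)/2) * gauss (n+1) ((3:ℝ) • μv) σ C := by
    unfold Dmix
    rw [Measure.add_apply, Measure.add_apply, Measure.smul_apply, Measure.smul_apply,
      Measure.smul_apply,
      (measurableEmbedding_prod_mk_right (1:ℝ)).map_apply,
      (measurableEmbedding_prod_mk_right (-1:ℝ)).map_apply,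
      (measurableEmbedding_prod_mk_right (-1:ℝ)).map_apply,
      hEpre1, hEpre2]
    simp [smul_eq_mul]
  -- set inclusions
  have hsub1 : Cᶜ ⊆ {x : EuclideanSpace ℝ (Fin (n+1)) | ⟪u, x⟫ ∈ Iic a'}
      ∪ {x : EuclideanSpace ℝ (Fin (n+1)) | ⟪u, x⟫ ∈ Ici b'} := by
    intro x hx
    rw [Set.mem_union]
    by_cases h1 : a' ≤ ⟪u, x⟫
    · right
      exact le_of_not_ge fun hb => hx ⟨h1, hb⟩
    · left
      exact le_of_not_ge h1
  have hb1 : gauss (n+1) μv σ Cᶜ ≤ ENNReal.ofReal Φ₁ + ENNReal.ofReal Φ₂ := by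
    refine le_trans (measure_mono hsub1) (le_trans (measure_union_le _ _) ?_)
    rw [v1, v2]
  have hb3 : gauss (n+1) (-μv) σ C ≤ ENNReal.ofReal Φ₃ := by
    rw [← v3]
    exact measure_mono fun x hx => hx.1
  have hb4 : gauss (n+1) ((3:ℝ) • μv) σ C ≤ ENNReal.ofReal Φ₄' := by
    rw [← v4]
    exact measure_mono fun x hx => hx.2
  -- Φ₄' ≤ Φ₄
  have h44 : Φ₄' ≤ Φ₄ := by
    rw [hΦ₄', hΦ₄]
    apply stdNormCDF_mono
    have hnp : σ * Real.log (1-p) ≤ 0 := by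
      have := mul_le_mul_of_nonneg_left hL hσ.le
      simpa using this
    have heq : σ * Real.log (1-p) / ‖μv‖
        = σ * Real.log (1-p) / (2*‖μv‖) + σ * Real.log (1-p) / (2*‖μv‖) := by
      field_simp
      ring
    have hle : σ * Real.log (1-p) / (2*‖μv‖) ≤ 0 :=
      div_nonpos_of_nonpos_of_nonneg hnp (by positivity)
    linarith
  -- final accounting
  have hRHSnn : 0 ≤ (1/2) * (Φ₁ + Φ₂ + p * Φ₃ + (1-p) * Φ₄) := by
    have := mul_nonneg hp0.le h3nn
    have := mul_nonneg hq0.le h4nn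
    linarith
  rw [hDmix]
  apply ENNReal.toReal_le_of_le_ofReal hRHSnn
  calc ENNReal.ofReal (1/2) * gauss (n+1) μv σ Cᶜ
        + ENNReal.ofReal (p/2) * gauss (n+1) (-μv) σ C
        + ENNReal.ofReal ((1-p)/2) * gauss (n+1) ((3:ℝ) • μv) σ C
      ≤ ENNReal.ofReal (1/2) * (ENNReal.ofReal Φ₁ + ENNReal.ofReal Φ₂)
        + ENNReal.ofReal (p/2) * ENNReal.ofReal Φ₃
        + ENNReal.ofReal ((1-p)/2) * ENNReal.ofReal Φ₄' :=
      add_le_add (add_le_add (mul_le_mul_right hb1 _) (mul_le_mul_right hb3 _))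
        (mul_le_mul_right hb4 _)
    _ = ENNReal.ofReal ((1/2) * (Φ₁ + Φ₂) + (p/2) * Φ₃ + ((1-p)/2) * Φ₄') := by
      rw [← ENNReal.ofReal_add h1nn h2nn,
        ← ENNReal.ofReal_mul (by norm_num : (0:ℝ) ≤ 1/2),
        ← ENNReal.ofReal_mul (by linarith : (0:ℝ) ≤ p/2),
        ← ENNReal.ofReal_mul (by linarith : (0:ℝ) ≤ (1-p)/2),
        ← ENNReal.ofReal_add (by linarith [mul_nonneg (by norm_num : (0:ℝ) ≤ (1:ℝ)/2) (add_nonneg h1nn h2nn)])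
          (by positivity),
        ← ENNReal.ofReal_add (by positivity) (by positivity)]
    _ ≤ ENNReal.ofReal ((1/2) * (Φ₁ + Φ₂ + p * Φ₃ + (1-p) * Φ₄)) := by
      apply ENNReal.ofReal_le_ofReal
      have h44' : ((1-p)/2) * Φ₄' ≤ ((1-p)/2) * Φ₄ :=
        mul_le_mul_of_nonneg_left h44 (by linarith)
      linarith
end

section
/- Fix d ≥ 1, a nonzero vector μ ∈ ℝ^d, σ > 0, and p ∈ (1/2, 1). Let f(·; m, σ²I) denote the N(m, σ²I) density and let X be distributed as N(−μ, σ²I). Then Pr[f(X; μ, σ²I) ≥ p·f(X; −μ, σ²I) and f(X; μ, σ²I) ≥ (1−p)·f(X; 3μ, σ²I)] ≤ Φ(−‖μ‖/σ − σ·ln p/(2‖μ‖)). -/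
set_option maxHeartbeats 1000000


open MeasureTheory Real Set ProbabilityTheory
open scoped ENNReal RealInnerProductSpace

noncomputable def g1 (σ t : ℝ) : ℝ :=
  (2 * Real.pi * σ ^ 2) ^ (-(1:ℝ) / 2) * Real.exp (-t ^ 2 / (2 * σ ^ 2))

lemma g1_nonneg (σ t : ℝ) : 0 ≤ g1 σ t := by
  unfold g1; positivity

lemma g1_integrable {σ : ℝ} (hσ : 0 < σ) : Integrable (g1 σ) := by
  unfold g1
  have : ∀ t : ℝ, -t ^ 2 / (2 * σ ^ 2) = -(2 * σ ^ 2)⁻¹ * t ^ 2 := by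
    intro t; field_simp
  simp_rw [this]
  have h2 : (0:ℝ) < (2 * σ ^ 2)⁻¹ := by positivity
  exact (integrable_exp_neg_mul_sq h2).const_mul _

lemma integral_g1 {σ : ℝ} (hσ : 0 < σ) : ∫ t, g1 σ t = 1 := by
  unfold g1
  have h : ∀ t : ℝ, -t ^ 2 / (2 * σ ^ 2) = -(2 * σ ^ 2)⁻¹ * t ^ 2 := by
    intro t; field_simp
  simp_rw [h, integral_const_mul, integral_gaussian]
  have h1 : π / (2 * σ ^ 2)⁻¹ = 2 * π * σ ^ 2 := by field_simp
  rw [h1, Real.sqrt_eq_rpow, neg_div, Real.rpow_neg (by positivity), inv_mul_cancel₀]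
  exact ne_of_gt (Real.rpow_pos_of_pos (by positivity) _)

lemma integral_g1_Ici {σ : ℝ} (hσ : 0 < σ) (c : ℝ) :
    ∫ t in Set.Ici c, g1 σ t = stdNormCDF (-c / σ) := by
  have h2π : (0:ℝ) < 2 * π := by positivity
  have hA : stdNormCDF (-c / σ) = ∫ x in Set.Ioi (c / σ),
      (1 / Real.sqrt (2 * π)) * Real.exp (-x ^ 2 / 2) := by
    have A := integral_comp_neg_Iic (-(c / σ))
      (fun u => (1 / Real.sqrt (2 * π)) * Real.exp (-u ^ 2 / 2))
    simp only [neg_neg, neg_sq] at A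
    rw [stdNormCDF, neg_div]
    exact A
  have hB := integral_comp_mul_left_Ioi (g1 σ) (c / σ) hσ
  rw [show σ * (c / σ) = c from by field_simp] at hB
  have hg : ∀ x : ℝ, g1 σ (σ * x) =
      (2 * π * σ ^ 2) ^ (-(1:ℝ) / 2) * Real.exp (-x ^ 2 / 2) := by
    intro x
    unfold g1
    congr 1
    congr 1
    have : (σ * x) ^ 2 = σ ^ 2 * x ^ 2 := by ring
    rw [this]
    field_simp
  have hconst : σ * (2 * π * σ ^ 2) ^ (-(1:ℝ) / 2) = 1 / Real.sqrt (2 * π) := by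
    rw [neg_div, Real.rpow_neg (by positivity), ← Real.sqrt_eq_rpow,
      show 2 * π * σ ^ 2 = (2 * π) * σ ^ 2 from by ring,
      Real.sqrt_mul h2π.le, Real.sqrt_sq hσ.le]
    rw [one_div, mul_inv]
    field_simp
  rw [hA, MeasureTheory.integral_Ici_eq_integral_Ioi]
  simp_rw [hg, integral_const_mul, smul_eq_mul] at hB
  rw [integral_const_mul, ← hconst, mul_assoc, hB, ← mul_assoc,
    mul_inv_cancel₀ hσ.ne', one_mul]

lemma setIntegral_comp_add_right_Ici (f : ℝ → ℝ) (c a : ℝ) :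
    ∫ t in Set.Ici c, f (t + a) = ∫ t in Set.Ici (c + a), f t := by
  rw [← integral_indicator measurableSet_Ici, ← integral_indicator measurableSet_Ici,
    ← integral_add_right_eq_self (fun t => (Set.Ici (c + a)).indicator f t) a]
  congr 1
  ext t
  by_cases ht : c ≤ t
  · rw [Set.indicator_of_mem (by simpa using ht),
      Set.indicator_of_mem (by simp [ht])]
  · rw [Set.indicator_of_notMem (by simpa using ht),
      Set.indicator_of_notMem (by simp [ht])]

lemma gaussPdf_eq_prod (d : ℕ) {σ : ℝ} (hσ : 0 < σ) (m x : EuclideanSpace ℝ (Fin d)) :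
    gaussPdf d m σ x = ∏ i, g1 σ (x i - m i) := by
  unfold gaussPdf g1
  rw [Finset.prod_mul_distrib, Finset.prod_const, ← Real.exp_sum, Finset.card_univ,
    Fintype.card_fin]
  have h1 : ((2 * π * σ ^ 2 : ℝ) ^ (-(1:ℝ) / 2)) ^ d = (2 * π * σ ^ 2) ^ (-(d : ℝ) / 2) := by
    rw [← Real.rpow_natCast ((2 * π * σ ^ 2) ^ (-(1:ℝ) / 2)) d,
      ← Real.rpow_mul (by positivity)]
    norm_num
    ring_nf
  have h2 : ‖x - m‖ ^ 2 = ∑ i, (x i - m i) ^ 2 := by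
    rw [EuclideanSpace.norm_eq, Real.sq_sqrt (by positivity)]
    refine Finset.sum_congr rfl fun i _ => ?_
    simp [Real.norm_eq_abs, sq_abs]
  rw [h1, h2]
  rw [neg_div, ← Finset.sum_div]
  congr 2
  rw [← Finset.sum_neg_distrib]

lemma pi_halfspace_integral (d : ℕ) (i₀ : Fin d) {σ : ℝ} (a c : ℝ) (hσ : 0 < σ) :
    ∫ z in {z : Fin d → ℝ | c ≤ z i₀},
      (∏ i, g1 σ (z i - if i = i₀ then -a else 0)) = stdNormCDF (-(c + a) / σ) := by
  classical
  set F : Fin d → ℝ → ℝ := fun i t =>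
    if i = i₀ then (Set.Ici c).indicator (fun s => g1 σ (s + a)) t else g1 σ t with hF
  have hmeas : MeasurableSet {z : Fin d → ℝ | c ≤ z i₀} :=
    measurableSet_le measurable_const (measurable_pi_apply i₀)
  rw [← integral_indicator hmeas]
  have hind : ∀ z : Fin d → ℝ,
      Set.indicator {z : Fin d → ℝ | c ≤ z i₀}
        (fun z => ∏ i, g1 σ (z i - if i = i₀ then -a else 0)) z = ∏ i, F i (z i) := by
    intro z
    by_cases hz : z ∈ {z : Fin d → ℝ | c ≤ z i₀}
    · rw [Set.indicator_of_mem hz]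
      refine Finset.prod_congr rfl fun i _ => ?_
      by_cases hi : i = i₀
      · have hz' : c ≤ z i₀ := hz
        simp [hF, hi, Set.indicator_of_mem, hz', sub_neg_eq_add]
      · simp [hF, hi]
    · rw [Set.indicator_of_notMem hz]
      symm
      refine Finset.prod_eq_zero (Finset.mem_univ i₀) ?_
      have hz' : ¬ c ≤ z i₀ := hz
      simp [hF, Set.indicator_of_notMem, hz']
  simp_rw [hind]
  rw [volume_pi, MeasureTheory.integral_fintype_prod_eq_prod F]
  rw [Finset.prod_eq_single i₀]
  · simp only [hF, if_pos rfl]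
    rw [MeasureTheory.integral_indicator measurableSet_Ici,
      setIntegral_comp_add_right_Ici, integral_g1_Ici hσ]
  · intro i _ hi
    simp only [hF, if_neg hi]
    exact integral_g1 hσ
  · intro h
    exact absurd (Finset.mem_univ i₀) h

lemma gaussPdf_integrable (d : ℕ) {σ : ℝ} (hσ : 0 < σ) (m : EuclideanSpace ℝ (Fin d)) :
    Integrable (gaussPdf d m σ) := by
  have mp : MeasurePreserving (MeasurableEquiv.toLp 2 (Fin d → ℝ)) :=
    (EuclideanSpace.volume_preserving_symm_measurableEquiv_toLp (Fin d)).symm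
  rw [← mp.integrable_comp_emb (MeasurableEquiv.measurableEmbedding _)]
  have : (gaussPdf d m σ) ∘ (MeasurableEquiv.toLp 2 (Fin d → ℝ)) =
      fun z : Fin d → ℝ => ∏ i, (fun t => g1 σ (t - m i)) (z i) := by
    ext z
    simp only [Function.comp_apply]
    rw [gaussPdf_eq_prod d hσ]
    rfl
  rw [this]
  exact Integrable.fintype_prod fun i => (g1_integrable hσ).comp_sub_right (m i)

lemma euclid_halfspace_integral (d : ℕ) (i₀ : Fin d) {σ : ℝ} (a c : ℝ) (hσ : 0 < σ) :
    ∫ y in {y : EuclideanSpace ℝ (Fin d) | c ≤ y i₀},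
      gaussPdf d (EuclideanSpace.single i₀ (-a)) σ y = stdNormCDF (-(c + a) / σ) := by
  have mp : MeasurePreserving (MeasurableEquiv.toLp 2 (Fin d → ℝ)) :=
    (EuclideanSpace.volume_preserving_symm_measurableEquiv_toLp (Fin d)).symm
  have emb := MeasurableEquiv.measurableEmbedding
    (MeasurableEquiv.toLp 2 (Fin d → ℝ))
  have key := mp.setIntegral_preimage_emb emb
    (gaussPdf d (EuclideanSpace.single i₀ (-a)) σ)
    {y : EuclideanSpace ℝ (Fin d) | c ≤ y i₀}
  rw [← key]
  have hpre : (MeasurableEquiv.toLp 2 (Fin d → ℝ)) ⁻¹'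
      {y : EuclideanSpace ℝ (Fin d) | c ≤ y i₀} = {z : Fin d → ℝ | c ≤ z i₀} := rfl
  rw [hpre]
  rw [← pi_halfspace_integral d i₀ a c hσ]
  refine setIntegral_congr_fun (measurableSet_le measurable_const (measurable_pi_apply i₀))
    fun z _ => ?_
  rw [gaussPdf_eq_prod d hσ]
  refine Finset.prod_congr rfl fun i _ => ?_
  congr 1
  have : (EuclideanSpace.single i₀ (-a) : EuclideanSpace ℝ (Fin d)) i
      = if i = i₀ then -a else 0 := EuclideanSpace.single_apply i₀ (-a) i
  rw [this]
  rfl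

/-- For `X ∼ N(−μ, σ²I)`, the probability that the MDA classifier assigns label
`+1` to `X` is at most `Φ(−‖μ‖/σ − σ ln p/(2‖μ‖))`. -/
theorem mda_err_neg_major (d : ℕ) (hd : 1 ≤ d) (μv : EuclideanSpace ℝ (Fin d)) (hμ : μv ≠ 0)
    (σ p : ℝ) (hσ : 0 < σ) (hp1 : 1 / 2 < p) (hp2 : p < 1) :
    ((gauss d (-μv) σ) {x | p * gaussPdf d (-μv) σ x ≤ gaussPdf d μv σ x ∧
        (1 - p) * gaussPdf d ((3 : ℝ) • μv) σ x ≤ gaussPdf d μv σ x}).toReal ≤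
      stdNormCDF (-‖μv‖ / σ - σ * Real.log p / (2 * ‖μv‖)) := by
  classical
  have hp0 : (0:ℝ) < p := by linarith
  have hμn : (0:ℝ) < ‖μv‖ := norm_pos_iff.mpr hμ
  set c : ℝ := σ ^ 2 * Real.log p / (2 * ‖μv‖) with hc
  set H : Set (EuclideanSpace ℝ (Fin d)) :=
    {x | σ ^ 2 * Real.log p / 2 ≤ ⟪x, μv⟫} with hH
  -- Step 1: the event is contained in the halfspace H
  have hsub : {x | p * gaussPdf d (-μv) σ x ≤ gaussPdf d μv σ x ∧
      (1 - p) * gaussPdf d ((3 : ℝ) • μv) σ x ≤ gaussPdf d μv σ x} ⊆ H := by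
    rintro x ⟨h1, -⟩
    have hC : (0:ℝ) < (2 * π * σ ^ 2) ^ (-(d:ℝ) / 2) :=
      Real.rpow_pos_of_pos (by positivity) _
    unfold gaussPdf at h1
    rw [mul_left_comm] at h1
    have h2 := (mul_le_mul_iff_right₀ hC).mp h1
    have h3 := Real.log_le_log (by positivity) h2
    rw [Real.log_mul hp0.ne' (Real.exp_ne_zero _), Real.log_exp, Real.log_exp,
      sub_neg_eq_add] at h3
    have hplus : ‖x + μv‖ ^ 2 = ‖x‖ ^ 2 + 2 * ⟪x, μv⟫ + ‖μv‖ ^ 2 := norm_add_sq_real x μv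
    have hminus : ‖x - μv‖ ^ 2 = ‖x‖ ^ 2 - 2 * ⟪x, μv⟫ + ‖μv‖ ^ 2 := norm_sub_sq_real x μv
    have hs2 : (0:ℝ) < 2 * σ ^ 2 := by positivity
    have h5 := mul_le_mul_of_nonneg_right h3 hs2.le
    rw [add_mul, div_mul_cancel₀ _ hs2.ne', div_mul_cancel₀ _ hs2.ne'] at h5
    show σ ^ 2 * Real.log p / 2 ≤ ⟪x, μv⟫
    nlinarith [h5, hplus, hminus]
  -- Step 2: H is measurable
  have hHmeas : MeasurableSet H := by
    have hcont : Continuous fun x : EuclideanSpace ℝ (Fin d) => ⟪x, μv⟫ :=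
      continuous_id.inner continuous_const
    exact measurableSet_le measurable_const hcont.measurable
  -- Step 3: value of gauss on H
  have hint : Integrable (gaussPdf d (-μv) σ) := gaussPdf_integrable d hσ (-μv)
  have hnn : ∀ x, 0 ≤ gaussPdf d (-μv) σ x := by
    intro x; unfold gaussPdf; positivity
  have hHval : (gauss d (-μv) σ) H = ENNReal.ofReal (∫ x in H, gaussPdf d (-μv) σ x) := by
    rw [gauss, withDensity_apply _ hHmeas,
      ← ofReal_integral_eq_lintegral_ofReal hint.integrableOn
        (Filter.Eventually.of_forall fun x => hnn x)]
  -- Step 4: orthonormal basis with b i₀ = μv / ‖μv‖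
  have hcard : Module.finrank ℝ (EuclideanSpace ℝ (Fin d)) = Fintype.card (Fin d) := by
    simp [finrank_euclideanSpace]
  set i₀ : Fin d := ⟨0, by omega⟩ with hi₀
  have hortho : Orthonormal ℝ (({i₀} : Set (Fin d)).restrict
      (fun _ => (‖μv‖⁻¹ • μv : EuclideanSpace ℝ (Fin d)))) := by
    constructor
    · intro i
      show ‖‖μv‖⁻¹ • μv‖ = 1
      rw [norm_smul, norm_inv, norm_norm, inv_mul_cancel₀ hμn.ne']
    · intro i j hij
      exact absurd (Subsingleton.elim i j) hij
  obtain ⟨b, hb⟩ := hortho.exists_orthonormalBasis_extension_of_card_eq hcard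
  have hb0 : b i₀ = ‖μv‖⁻¹ • μv := hb i₀ rfl
  have hμb : μv = ‖μv‖ • b i₀ := by
    rw [hb0, smul_smul, mul_inv_cancel₀ hμn.ne', one_smul]
  -- Step 5: change of variables
  have mp := b.measurePreserving_repr_symm
  have emb : MeasurableEmbedding (⇑b.repr.symm) :=
    b.repr.symm.toHomeomorph.measurableEmbedding
  have key := mp.setIntegral_preimage_emb emb (gaussPdf d (-μv) σ) H
  have hpre : ⇑b.repr.symm ⁻¹' H = {z : EuclideanSpace ℝ (Fin d) | c ≤ z i₀} := by
    ext z
    simp only [Set.mem_preimage, Set.mem_setOf_eq, hH]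
    have hinner : ⟪b.repr.symm z, μv⟫ = ‖μv‖ * z i₀ := by
      calc ⟪b.repr.symm z, μv⟫ = ⟪b.repr.symm z, ‖μv‖ • b i₀⟫ := by rw [← hμb]
      _ = ‖μv‖ * ⟪b.repr.symm z, b i₀⟫ := real_inner_smul_right _ _ _
      _ = ‖μv‖ * z i₀ := by
          rw [real_inner_comm, ← OrthonormalBasis.repr_apply_apply,
            LinearIsometryEquiv.apply_symm_apply]
    rw [hinner, hc, div_le_iff₀ (by positivity : (0:ℝ) < 2 * ‖μv‖),
      div_le_iff₀ (by norm_num : (0:ℝ) < 2)]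
    constructor <;> intro h <;> nlinarith
  have hpdfz : ∀ z, gaussPdf d (-μv) σ (b.repr.symm z) =
      gaussPdf d (EuclideanSpace.single i₀ (-‖μv‖)) σ z := by
    intro z
    have h1 : EuclideanSpace.single i₀ (‖μv‖ : ℝ)
        = ‖μv‖ • EuclideanSpace.single i₀ (1:ℝ) := by
      ext j
      simp [EuclideanSpace.single_apply, mul_ite]
    have hneg : EuclideanSpace.single i₀ (-‖μv‖ : ℝ)
        = -EuclideanSpace.single i₀ (‖μv‖ : ℝ) := by
      ext j
      simp only [EuclideanSpace.single_apply, PiLp.neg_apply]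
      split <;> simp
    have hsingle : b.repr.symm (EuclideanSpace.single i₀ (‖μv‖ : ℝ)) = μv := by
      rw [h1, LinearIsometryEquiv.map_smul, ← OrthonormalBasis.repr_self b i₀,
        LinearIsometryEquiv.symm_apply_apply, ← hμb]
    have hnorm : ‖b.repr.symm z - -μv‖ = ‖z - EuclideanSpace.single i₀ (-‖μv‖)‖ := by
      rw [sub_neg_eq_add, hneg, sub_neg_eq_add,
        show b.repr.symm z + μv = b.repr.symm (z + EuclideanSpace.single i₀ (‖μv‖:ℝ)) from by
          rw [map_add, hsingle],
        LinearIsometryEquiv.norm_map]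
    unfold gaussPdf
    rw [hnorm]
  rw [hpre] at key
  have hval2 : ∫ x in H, gaussPdf d (-μv) σ x = stdNormCDF (-(c + ‖μv‖) / σ) := by
    rw [← key]
    rw [show (∫ z in {z : EuclideanSpace ℝ (Fin d) | c ≤ z i₀},
        gaussPdf d (-μv) σ (b.repr.symm z))
        = ∫ z in {z : EuclideanSpace ℝ (Fin d) | c ≤ z i₀},
        gaussPdf d (EuclideanSpace.single i₀ (-‖μv‖)) σ z from by
      refine setIntegral_congr_fun ?_ fun z _ => hpdfz z
      rw [← hpre]
      exact hHmeas.preimage emb.measurable]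
    exact euclid_halfspace_integral d i₀ ‖μv‖ c hσ
  have htarget : -(c + ‖μv‖) / σ = -‖μv‖ / σ - σ * Real.log p / (2 * ‖μv‖) := by
    rw [hc]
    field_simp
    ring
  have hfin : (gauss d (-μv) σ) {x | p * gaussPdf d (-μv) σ x ≤ gaussPdf d μv σ x ∧
      (1 - p) * gaussPdf d ((3 : ℝ) • μv) σ x ≤ gaussPdf d μv σ x}
      ≤ ENNReal.ofReal (stdNormCDF (-‖μv‖ / σ - σ * Real.log p / (2 * ‖μv‖))) := by
    calc (gauss d (-μv) σ) _ ≤ (gauss d (-μv) σ) H := measure_mono hsub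
    _ = ENNReal.ofReal (∫ x in H, gaussPdf d (-μv) σ x) := hHval
    _ = ENNReal.ofReal (stdNormCDF (-‖μv‖ / σ - σ * Real.log p / (2 * ‖μv‖))) := by
        rw [hval2, htarget]
  refine ENNReal.toReal_le_of_le_ofReal ?_ hfin
  exact setIntegral_nonneg measurableSet_Iic fun u _ => by positivity
end
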